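/- Let n ≥ 3, let k₀ > 0 and let γ₁ satisfy k₀ ≤ γ₁ ≤ 1/2. Define Π₁ = span{e₁, …, e_{n−1}} and Π₂ = span{e₁, …, e_{n−2}, (e_{n−1} + γ₁ eₙ)/√(1+γ₁²)} in ℝⁿ. There exists a constant C > 0, depending only on k₀, such that if a real symmetric n×n matrix g satisfies |⟨g v, w⟩| ≤ ε for all unit vectors v, w ∈ Π₁ and all unit vectors v, w ∈ Π₂, then |g_{i,n}| ≤ C ε for every i = 1, …, n−2, and |2 g_{n−1,n} + γ₁ g_{n,n}| ≤ C ε. -/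

import Mathlib

open Matrix
open scoped RealInnerProductSpace

lemma stmt10_key (n : ℕ) (g : Matrix (Fin n) (Fin n) ℝ) (i j : Fin n) :
    ⟪Matrix.toEuclideanCLM (𝕜 := ℝ) g (EuclideanSpace.single i (1:ℝ)),
      EuclideanSpace.single j (1:ℝ)⟫ = g j i := by
  rw [EuclideanSpace.inner_single_right]
  have h := Matrix.ofLp_toEuclideanCLM (𝕜 := ℝ) g (EuclideanSpace.single i (1:ℝ))
  have : (Matrix.toEuclideanCLM (𝕜 := ℝ) g (EuclideanSpace.single i (1:ℝ))) j
      = (g *ᵥ (WithLp.equiv 2 _ (EuclideanSpace.single i (1:ℝ)))) j := congrFun h j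
  simp [this, PiLp.ofLp_single, Matrix.mulVec_single]

set_option maxHeartbeats 1000000 in
/-- For `k₀ > 0` there is `C > 0` depending only on `k₀` such that:
if `k₀ ≤ γ₁ ≤ 1/2`, `Π₁ = span{e₁,…,e_{n-1}}`,
`Π₂ = span{e₁,…,e_{n-2}, (e_{n-1}+γ₁eₙ)/√(1+γ₁²)}`, and the symmetric matrix `g`
satisfies `|⟨g v, w⟩| ≤ ε` for all unit `v, w ∈ Π₁` and all unit `v, w ∈ Π₂`, then
`|g_{i,n}| ≤ C ε` for `i = 1,…,n-2` and `|2 g_{n-1,n} + γ₁ g_{n,n}| ≤ C ε`. -/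
theorem stmt10 (k₀ : ℝ) (hk₀ : 0 < k₀) :
    ∃ C : ℝ, 0 < C ∧
      ∀ (n : ℕ) (hn : 3 ≤ n) (γ₁ : ℝ), k₀ ≤ γ₁ → γ₁ ≤ 1 / 2 →
      ∀ Pi1 Pi2 : Submodule ℝ (EuclideanSpace ℝ (Fin n)),
        Pi1 = Submodule.span ℝ
          {v : EuclideanSpace ℝ (Fin n) |
            ∃ i : Fin n, (i : ℕ) < n - 1 ∧ v = EuclideanSpace.single i (1 : ℝ)} →
        Pi2 = Submodule.span ℝ
          ({v : EuclideanSpace ℝ (Fin n) |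
              ∃ i : Fin n, (i : ℕ) < n - 2 ∧ v = EuclideanSpace.single i (1 : ℝ)} ∪
            {(1 / Real.sqrt (1 + γ₁ ^ 2)) •
              (EuclideanSpace.single (⟨n - 2, by omega⟩ : Fin n) (1 : ℝ) +
                γ₁ • EuclideanSpace.single (⟨n - 1, by omega⟩ : Fin n) (1 : ℝ))}) →
      ∀ (ε : ℝ) (g : Matrix (Fin n) (Fin n) ℝ), g.IsSymm →
        (∀ v w : EuclideanSpace ℝ (Fin n), v ∈ Pi1 → w ∈ Pi1 → ‖v‖ = 1 → ‖w‖ = 1 →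
          |⟪Matrix.toEuclideanCLM (𝕜 := ℝ) g v, w⟫| ≤ ε) →
        (∀ v w : EuclideanSpace ℝ (Fin n), v ∈ Pi2 → w ∈ Pi2 → ‖v‖ = 1 → ‖w‖ = 1 →
          |⟪Matrix.toEuclideanCLM (𝕜 := ℝ) g v, w⟫| ≤ ε) →
        (∀ i : Fin n, (i : ℕ) < n - 2 →
            |g i (⟨n - 1, by omega⟩ : Fin n)| ≤ C * ε) ∧
          |2 * g (⟨n - 2, by omega⟩ : Fin n) (⟨n - 1, by omega⟩ : Fin n) +
              γ₁ * g (⟨n - 1, by omega⟩ : Fin n) (⟨n - 1, by omega⟩ : Fin n)| ≤ C * ε := by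
  refine ⟨3 / k₀, by positivity, ?_⟩
  intro n hn γ₁ hγ₁ hγ₂ Pi1 Pi2 hPi1 hPi2 ε g hsymm h1 h2
  have hγ₀ : 0 < γ₁ := lt_of_lt_of_le hk₀ hγ₁
  set a : Fin n := ⟨n - 2, by omega⟩ with ha
  set b : Fin n := ⟨n - 1, by omega⟩ with hb
  have hab : a ≠ b := by simp [ha, hb, Fin.ext_iff]; omega
  set s : ℝ := Real.sqrt (1 + γ₁ ^ 2) with hs
  have hs2 : s ^ 2 = 1 + γ₁ ^ 2 := Real.sq_sqrt (by positivity)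
  have hs0 : 0 < s := Real.sqrt_pos.mpr (by positivity)
  set E : Fin n → EuclideanSpace ℝ (Fin n) := fun i => EuclideanSpace.single i (1 : ℝ)
    with hE
  set u : EuclideanSpace ℝ (Fin n) := (1 / s) • (E a + γ₁ • E b) with hu
  -- memberships
  have mem1 : ∀ i : Fin n, (i : ℕ) < n - 1 → E i ∈ Pi1 := fun i hi => by
    rw [hPi1]; exact Submodule.subset_span ⟨i, hi, rfl⟩
  have mem2 : ∀ i : Fin n, (i : ℕ) < n - 2 → E i ∈ Pi2 := fun i hi => by
    rw [hPi2]; exact Submodule.subset_span (Or.inl ⟨i, hi, rfl⟩)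
  have memu : u ∈ Pi2 := by
    rw [hPi2]; exact Submodule.subset_span (Or.inr rfl)
  -- norms
  have normE : ∀ i : Fin n, ‖E i‖ = 1 := fun i => by
    simp [hE, EuclideanSpace.norm_single]
  have hinner_ab : ⟪E a, γ₁ • E b⟫ = 0 := by
    rw [real_inner_smul_right, EuclideanSpace.inner_single_left]
    simp [hE, EuclideanSpace.single_apply, hab]
  have hw : ‖E a + γ₁ • E b‖ = s := by
    have hsq : ‖E a + γ₁ • E b‖ ^ 2 = 1 + γ₁ ^ 2 := by
      rw [norm_add_sq_real, hinner_ab, norm_smul, normE, normE, Real.norm_eq_abs, abs_of_pos hγ₀]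
      ring
    rw [← Real.sqrt_sq (norm_nonneg _), hsq]
  have normu : ‖u‖ = 1 := by
    rw [hu, norm_smul, hw, Real.norm_eq_abs, abs_of_pos (by positivity : (0:ℝ) < 1 / s)]
    field_simp
  -- ε nonneg
  have hε0 : 0 ≤ ε := by
    have h00 := h1 (E ⟨0, by omega⟩) (E ⟨0, by omega⟩)
      (mem1 _ (by simp; omega)) (mem1 _ (by simp; omega)) (normE _) (normE _)
    exact le_trans (abs_nonneg _) h00
  -- inner product values
  set gl := Matrix.toEuclideanCLM (𝕜 := ℝ) g with hgl
  have keyE : ∀ i j : Fin n, ⟪gl (E i), E j⟫ = g j i := fun i j => stmt10_key n g i j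
  have hglu : ∀ j : Fin n, ⟪gl u, E j⟫ = (1 / s) * (g j a + γ₁ * g j b) := fun j => by
    rw [hu, _root_.map_smul, real_inner_smul_left, map_add, inner_add_left, _root_.map_smul,
      real_inner_smul_left, keyE, keyE]
  have hglEu : ∀ i : Fin n, ⟪gl (E i), u⟫ = (1 / s) * (g a i + γ₁ * g b i) := fun i => by
    rw [hu, real_inner_smul_right, inner_add_right, real_inner_smul_right, keyE, keyE]
  have huu : ⟪gl u, u⟫ = (1 / s) ^ 2 * (g a a + 2 * γ₁ * g a b + γ₁ ^ 2 * g b b) := by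
    rw [hu]
    conv_lhs => rw [_root_.map_smul, real_inner_smul_left]
    rw [real_inner_smul_right, inner_add_right, real_inner_smul_right, map_add, _root_.map_smul,
      inner_add_left, inner_add_left, real_inner_smul_left, real_inner_smul_left,
      keyE, keyE, keyE, keyE, hsymm.apply a b]
    ring
  constructor
  · intro i hi
    have A1 : |g i a| ≤ ε := by
      have := h1 (E a) (E i) (mem1 a (by simp [ha]; omega)) (mem1 i (by omega))
        (normE _) (normE _)
      rwa [keyE] at this
    have A2 : |(1 / s) * (g i a + γ₁ * g i b)| ≤ ε := by
      have := h2 u (E i) memu (mem2 i hi) normu (normE _)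
      rwa [hglu] at this
    have hsle : s ≤ 2 := by
      nlinarith [Real.sq_sqrt (show (0:ℝ) ≤ 1 + γ₁ ^ 2 by positivity), hs0]
    have A3 : |g i a + γ₁ * g i b| ≤ 2 * ε := by
      rw [abs_mul, abs_of_pos (by positivity : (0:ℝ) < 1 / s)] at A2
      calc |g i a + γ₁ * g i b| = s * ((1/s) * |g i a + γ₁ * g i b|) := by
            field_simp
        _ ≤ 2 * ε := by
            have h' : (1/s) * |g i a + γ₁ * g i b| ≤ ε := A2
            nlinarith [mul_nonneg (by positivity : (0:ℝ) ≤ 1/s)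
              (abs_nonneg (g i a + γ₁ * g i b)), hsle, hε0, hs0]
    have A4 : |γ₁ * g i b| ≤ 3 * ε := by
      have h5 := abs_sub (g i a + γ₁ * g i b) (g i a)
      simp only [add_sub_cancel_left] at h5
      linarith
    rw [abs_mul, abs_of_pos hγ₀] at A4
    rw [div_mul_eq_mul_div, le_div_iff₀ hk₀]
    nlinarith [abs_nonneg (g i b)]
  · have B1 : |g a a| ≤ ε := by
      have := h1 (E a) (E a) (mem1 a (by simp [ha]; omega)) (mem1 a (by simp [ha]; omega))
        (normE _) (normE _)
      rwa [keyE] at this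
    have B2 : |(1 / s) ^ 2 * (g a a + 2 * γ₁ * g a b + γ₁ ^ 2 * g b b)| ≤ ε := by
      have := h2 u u memu memu normu normu
      rwa [huu] at this
    have hss : (0:ℝ) < s ^ 2 := by positivity
    have B3 : |g a a + 2 * γ₁ * g a b + γ₁ ^ 2 * g b b| ≤ (1 + γ₁ ^ 2) * ε := by
      rw [abs_mul, abs_of_pos (by positivity : (0:ℝ) < (1 / s) ^ 2)] at B2
      have : (1/s)^2 = 1 / (1 + γ₁ ^ 2) := by rw [div_pow, one_pow, hs2]
      rw [this] at B2
      calc |g a a + 2 * γ₁ * g a b + γ₁ ^ 2 * g b b|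
          = (1 + γ₁ ^ 2) * ((1 / (1 + γ₁ ^ 2)) * |g a a + 2 * γ₁ * g a b + γ₁ ^ 2 * g b b|) := by
            field_simp
        _ ≤ (1 + γ₁ ^ 2) * ε := by
            have h0 : (0:ℝ) < 1 + γ₁ ^ 2 := by positivity
            exact mul_le_mul_of_nonneg_left B2 h0.le
    have B4 : |2 * γ₁ * g a b + γ₁ ^ 2 * g b b| ≤ 3 * ε := by
      have h5 := abs_sub (g a a + 2 * γ₁ * g a b + γ₁ ^ 2 * g b b) (g a a)
      have harr : g a a + 2 * γ₁ * g a b + γ₁ ^ 2 * g b b - g a a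
          = 2 * γ₁ * g a b + γ₁ ^ 2 * g b b := by ring
      rw [harr] at h5
      nlinarith [mul_nonneg (show (0:ℝ) ≤ 1 - γ₁ ^ 2 by nlinarith) hε0]
    have B5 : γ₁ * |2 * g a b + γ₁ * g b b| ≤ 3 * ε := by
      have e1 : |γ₁ * (2 * g a b + γ₁ * g b b)| = γ₁ * |2 * g a b + γ₁ * g b b| := by
        rw [abs_mul, abs_of_pos hγ₀]
      have e2 : γ₁ * (2 * g a b + γ₁ * g b b) = 2 * γ₁ * g a b + γ₁ ^ 2 * g b b := by ring
      rw [← e1, e2]; exact B4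
    rw [div_mul_eq_mul_div, le_div_iff₀ hk₀]
    nlinarith [abs_nonneg (2 * g a b + γ₁ * g b b)]
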